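/- Let (Y, d) be a metric space, let T : Y → Y be Lipschitz with constant β ∈ (0,1), and let Π : Y → Y be Lipschitz with constant 1. Suppose η^π ∈ Y satisfies T(η^π) = η^π and η⋆ ∈ Y satisfies Π(T(η⋆)) = η⋆. Let ε := d(Π(η^π), η^π). Then d(η⋆, η^π) ≤ ε / (1 − β). -/
import Mathlib

/-- **Representation-error bound for the projected fixed point.** If `T` is a
`β`-contraction with fixed point `η^π`, `Π` is nonexpansive, and `η⋆` is the fixed
point of `Π ∘ T`, then `d(η⋆, η^π) ≤ ε/(1 − β)` where `ε := d(Π η^π, η^π)` is the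
representation error. -/
theorem projected_fixed_point_representation_error {Y : Type*} [MetricSpace Y]
    (T Proj : Y → Y) (β : ℝ) (hβ : β ∈ Set.Ioo (0 : ℝ) 1)
    (hT : ∀ x y : Y, dist (T x) (T y) ≤ β * dist x y)
    (hProj : ∀ x y : Y, dist (Proj x) (Proj y) ≤ dist x y)
    (ηπ ηstar : Y) (hηπ : T ηπ = ηπ) (hηstar : Proj (T ηstar) = ηstar) :
    dist ηstar ηπ ≤ dist (Proj ηπ) ηπ / (1 - β) := by
  obtain ⟨hβ0, hβ1⟩ := hβ
  have key : dist ηstar ηπ ≤ β * dist ηstar ηπ + dist (Proj ηπ) ηπ := by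
    calc dist ηstar ηπ ≤ dist ηstar (Proj ηπ) + dist (Proj ηπ) ηπ := dist_triangle _ _ _
    _ ≤ β * dist ηstar ηπ + dist (Proj ηπ) ηπ := by
        have : dist ηstar (Proj ηπ) ≤ β * dist ηstar ηπ := by
          calc dist ηstar (Proj ηπ) = dist (Proj (T ηstar)) (Proj (T ηπ)) := by rw [hηstar, hηπ]
          _ ≤ dist (T ηstar) (T ηπ) := hProj _ _
          _ ≤ β * dist ηstar ηπ := hT _ _
        linarith
  rw [le_div_iff₀ (by linarith)]
  nlinarith
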